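/- Let θ ∈ ℝ^N, W̃ ∈ ℝ^{N×N} symmetric positive definite, H ∈ ℝ^{N×n} with full column rank and θᵀW̃⁻¹H = 0, and γ > 0. Consider the problem: minimize (1/2)·βᵀW̃⁻¹β + θᵀW̃⁻¹β + γ·‖ϑ‖₁ over (α, β, ϑ) subject to H·α + β + ϑ = 0. If γ > ‖W̃⁻¹θ‖_∞, then the unique minimizer is α = 0, β = 0, ϑ = 0. -/

import Mathlib

open Matrix BigOperators

/-- ℓ¹-regularized fusion without attacks: if γ > ‖W̃⁻¹θ‖_∞ and θᵀW̃⁻¹H = 0, the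
problem min (1/2)βᵀW̃⁻¹β + θᵀW̃⁻¹β + γ‖ϑ‖₁ s.t. Hα + β + ϑ = 0 has unique
minimizer (α, β, ϑ) = (0, 0, 0). -/
theorem l1_regularized_no_attack
    {N n : ℕ}
    (θ : Fin N → ℝ)
    (Wt : Matrix (Fin N) (Fin N) ℝ)
    (H : Matrix (Fin N) (Fin n) ℝ)
    (γ : ℝ)
    (hWt : Wt.PosDef)
    (hH : Function.Injective H.mulVec)
    (hKKT : Hᵀ.mulVec (Wt⁻¹.mulVec θ) = 0)
    (hγ : ∀ i, |(Wt⁻¹.mulVec θ) i| < γ) :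
    ∀ (α : Fin n → ℝ) (β ϑ : Fin N → ℝ),
      H.mulVec α + β + ϑ = 0 →
      (0 ≤ (1 / 2) * (β ⬝ᵥ Wt⁻¹.mulVec β) + θ ⬝ᵥ Wt⁻¹.mulVec β + γ * ∑ i, |ϑ i|) ∧
      ((1 / 2) * (β ⬝ᵥ Wt⁻¹.mulVec β) + θ ⬝ᵥ Wt⁻¹.mulVec β + γ * ∑ i, |ϑ i| = 0 →
        α = 0 ∧ β = 0 ∧ ϑ = 0) := by
  intro α β ϑ hcon
  have hWinv : Wt⁻¹.PosDef := hWt.inv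
  set c : Fin N → ℝ := Wt⁻¹.mulVec θ with hc
  -- symmetry of Wt⁻¹
  have hsym : Wt⁻¹ᵀ = Wt⁻¹ := by
    have := hWinv.isHermitian
    simpa [Matrix.IsHermitian, Matrix.conjTranspose_eq_transpose_of_trivial] using this
  -- θ ⬝ᵥ Wt⁻¹ *ᵥ β = c ⬝ᵥ β
  have hlin : θ ⬝ᵥ Wt⁻¹.mulVec β = c ⬝ᵥ β := by
    rw [Matrix.dotProduct_mulVec, ← Matrix.mulVec_transpose, hsym]
  -- c ⬝ᵥ H *ᵥ α = 0
  have hcH : c ⬝ᵥ H.mulVec α = 0 := by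
    rw [Matrix.dotProduct_mulVec, ← Matrix.mulVec_transpose, hKKT, zero_dotProduct]
  -- β = -(Hα) - ϑ, hence c ⬝ᵥ β = - c ⬝ᵥ ϑ
  have hβ : β = -(H.mulVec α) - ϑ := by
    have := hcon
    funext i
    have h := congrFun hcon i
    simp only [Pi.add_apply, Pi.zero_apply] at h
    simp [Pi.sub_apply, Pi.neg_apply]
    linarith
  have hcβ : c ⬝ᵥ β = - (c ⬝ᵥ ϑ) := by
    rw [hβ]
    simp [dotProduct_sub, dotProduct_neg, hcH]
  -- quadratic part nonneg
  have hquad : 0 ≤ β ⬝ᵥ Wt⁻¹.mulVec β := by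
    have := hWinv.posSemidef.dotProduct_mulVec_nonneg β
    simpa using this
  -- l1 part: γ * Σ|ϑᵢ| - c ⬝ᵥ ϑ ≥ Σ (γ - |cᵢ|)|ϑᵢ| ≥ 0
  have hterm : ∀ i, c i * ϑ i ≤ γ * |ϑ i| := fun i => by
    calc c i * ϑ i ≤ |c i * ϑ i| := le_abs_self _
      _ = |c i| * |ϑ i| := abs_mul _ _
      _ ≤ γ * |ϑ i| := mul_le_mul_of_nonneg_right (hγ i).le (abs_nonneg _)
  have hl1 : c ⬝ᵥ ϑ ≤ γ * ∑ i, |ϑ i| := by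
    rw [dotProduct, Finset.mul_sum]
    exact Finset.sum_le_sum fun i _ => hterm i
  have hobj : (1 / 2) * (β ⬝ᵥ Wt⁻¹.mulVec β) + θ ⬝ᵥ Wt⁻¹.mulVec β + γ * ∑ i, |ϑ i|
      = (1 / 2) * (β ⬝ᵥ Wt⁻¹.mulVec β) + (γ * ∑ i, |ϑ i| - c ⬝ᵥ ϑ) := by
    rw [hlin, hcβ]; ring
  constructor
  · rw [hobj]
    have : 0 ≤ γ * ∑ i, |ϑ i| - c ⬝ᵥ ϑ := by linarith
    nlinarith
  · intro hzero
    rw [hobj] at hzero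
    have h1 : 0 ≤ (1 / 2) * (β ⬝ᵥ Wt⁻¹.mulVec β) := by linarith
    have h2 : 0 ≤ γ * ∑ i, |ϑ i| - c ⬝ᵥ ϑ := by linarith
    have hq0 : (1 / 2) * (β ⬝ᵥ Wt⁻¹.mulVec β) = 0 := by linarith
    have hβ0 : β = 0 := by
      by_contra hne
      have := hWinv.dotProduct_mulVec_pos hne
      simp only [star_trivial] at this
      linarith
    -- now γΣ|ϑ| - c⬝ϑ = 0 forces ϑ = 0
    have hl1zero : γ * ∑ i, |ϑ i| - c ⬝ᵥ ϑ = 0 := by linarith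
    have hϑ0 : ϑ = 0 := by
      by_contra hne
      obtain ⟨j, hj⟩ : ∃ j, ϑ j ≠ 0 := by
        by_contra hall
        push_neg at hall
        exact hne (funext hall)
      have hstrict : c j * ϑ j < γ * |ϑ j| := by
        calc c j * ϑ j ≤ |c j| * |ϑ j| := by
              rw [← abs_mul]; exact le_abs_self _
          _ < γ * |ϑ j| := by
              exact mul_lt_mul_of_pos_right (hγ j) (abs_pos.mpr hj)
      have : c ⬝ᵥ ϑ < γ * ∑ i, |ϑ i| := by
        rw [dotProduct, Finset.mul_sum]
        exact Finset.sum_lt_sum (fun i _ => hterm i) ⟨j, Finset.mem_univ j, hstrict⟩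
      linarith
    have hα0 : α = 0 := by
      have hHα : H.mulVec α = 0 := by
        rw [hβ0, hϑ0] at hcon
        simpa using hcon
      have : H.mulVec α = H.mulVec 0 := by simpa [Matrix.mulVec_zero] using hHα
      exact hH this
    exact ⟨hα0, hβ0, hϑ0⟩
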